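/- Let h : ℝ^d → ℝ be convex, let A ∈ ℝ^{d×d} be symmetric with A ⪰ ρ I_d for some ρ > 0, let γ > 0 and let w, x ∈ ℝ^d. Let x⁺ ∈ ℝ^d be a minimizer over ℝ^d of the function z ↦ ⟨w, z⟩ + (1/(2γ)) (z − x)ᵀ A (z − x) + h(z). Then ⟨w, x − x⁺⟩ ≥ (ρ/γ) ‖x⁺ − x‖² + h(x⁺) − h(x). -/

import Mathlib

open scoped RealInnerProductSpace

/-- If `x⁺` minimizes `z ↦ ⟨w, z⟩ + (1/2γ)(z−x)ᵀA(z−x) + h(z)` with `h`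
convex and `A` symmetric with `A ⪰ ρ I`, then
`⟨w, x − x⁺⟩ ≥ (ρ/γ)‖x⁺ − x‖² + h(x⁺) − h(x)`. -/
theorem stmt_6 {d : ℕ} (ρ γ : ℝ) (hρ : 0 < ρ) (hγ : 0 < γ)
    (h : EuclideanSpace ℝ (Fin d) → ℝ) (hconv : ConvexOn ℝ Set.univ h)
    (A : EuclideanSpace ℝ (Fin d) →L[ℝ] EuclideanSpace ℝ (Fin d))
    (hAsymm : ∀ v w, ⟪A v, w⟫ = ⟪v, A w⟫)
    (hApos : ∀ v, ρ * ‖v‖ ^ 2 ≤ ⟪A v, v⟫)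
    (w x xp : EuclideanSpace ℝ (Fin d))
    (hmin : ∀ z, ⟪w, xp⟫ + (1 / (2 * γ)) * ⟪A (xp - x), xp - x⟫ + h xp
      ≤ ⟪w, z⟫ + (1 / (2 * γ)) * ⟪A (z - x), z - x⟫ + h z) :
    ⟪w, x - xp⟫ ≥ (ρ / γ) * ‖xp - x‖ ^ 2 + h xp - h x := by
  set u := xp - x with hu
  set Q := ⟪A u, u⟫ with hQ
  have hQnn : 0 ≤ Q := le_trans (by positivity) (hApos u)
  have key : ∀ t : ℝ, 0 < t → t ≤ 1 →
      ⟪w, x - xp⟫ ≥ (2 - t) / (2 * γ) * Q + (h xp - h x) := by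
    intro t ht0 ht1
    have hz := hmin (xp + t • (x - xp))
    have hzx : xp + t • (x - xp) - x = (1 - t) • u := by
      rw [hu]; module
    have hconvh : h (xp + t • (x - xp)) ≤ (1 - t) * h xp + t * h x := by
      have hc := hconv.2 (Set.mem_univ xp) (Set.mem_univ x)
        (by linarith : (0:ℝ) ≤ 1 - t) ht0.le (by ring)
      have heq : (1 - t) • xp + t • x = xp + t • (x - xp) := by module
      rw [heq] at hc
      simpa using hc
    have hinner : ⟪w, xp + t • (x - xp)⟫ = ⟪w, xp⟫ + t * ⟪w, x - xp⟫ := by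
      rw [inner_add_right, real_inner_smul_right]
    have hAq : ⟪A ((1 - t) • u), (1 - t) • u⟫ = (1 - t) ^ 2 * Q := by
      rw [map_smul, real_inner_smul_left, real_inner_smul_right, hQ]; ring
    rw [hzx, hAq, hinner] at hz
    have h2 : 1 / (2 * γ) * (1 - (1 - t) ^ 2) * Q + t * (h xp - h x)
        ≤ t * ⟪w, x - xp⟫ := by nlinarith [hz, hconvh]
    have h3 : 1 / (2 * γ) * (1 - (1 - t) ^ 2) * Q = t * ((2 - t) / (2 * γ) * Q) := by
      field_simp; ring
    rw [h3] at h2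
    have := (mul_le_mul_iff_right₀ ht0).mp (by linarith : t * ((2 - t) / (2 * γ) * Q + (h xp - h x)) ≤ t * ⟪w, x - xp⟫)
    linarith
  have hQle : (ρ / γ) * ‖u‖ ^ 2 ≤ Q / γ := by
    have := hApos u
    rw [div_mul_eq_mul_div]
    exact div_le_div_of_nonneg_right this hγ.le |>.trans_eq rfl
  have hmain : Q / γ + (h xp - h x) ≤ ⟪w, x - xp⟫ := by
    apply le_of_forall_pos_le_add
    intro ε hε
    set t := min 1 (2 * γ * ε / (Q + 1)) with ht
    have ht0 : 0 < t := lt_min one_pos (by positivity)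
    have ht1 : t ≤ 1 := min_le_left _ _
    have ht2 : t ≤ 2 * γ * ε / (Q + 1) := min_le_right _ _
    have htQ : t * Q ≤ 2 * γ * ε := by
      have h1 : t * (Q + 1) ≤ 2 * γ * ε := by
        rw [← div_mul_cancel₀ (2 * γ * ε) (by positivity : (Q:ℝ) + 1 ≠ 0)]
        exact mul_le_mul_of_nonneg_right ht2 (by positivity)
      nlinarith
    have hk := key t ht0 ht1
    have : (2 - t) / (2 * γ) * Q = Q / γ - t * Q / (2 * γ) := by
      field_simp
    rw [this] at hk
    have : t * Q / (2 * γ) ≤ ε := by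
      rw [div_le_iff₀ (by positivity)]; linarith
    linarith
  linarith
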